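/- arXiv:1303.2227 — 2 statements merged into one kernel-verified Lean document; each statement's English description precedes it below -/
import Mathlib

section
/- For all integers n ≥ 1, c ≥ 1 and a, b ≥ 0, H*_n({2}^a,1,{2}^b,1,{2}^c) = -2·∑_{k=1}^{n} (-1)^k·C(n,k)/(k^{2(a+b+c)+2}·C(n+k,k)) - 4·∑_{k=1}^{n} H_{k-1}(-2c)·C(n,k)/(k^{2a+2b+2}·C(n+k,k)) - 4·∑_{k=1}^{n} H_{k-1}(-(2b+1+2c))·C(n,k)/(k^{2a+1}·C(n+k,k)) - 8·∑_{k=1}^{n} H_{k-1}(2b+1, -2c)·C(n,k)/(k^{2a+1}·C(n+k,k)). -/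
open Finset

/-- Sign factor for an alternating multiple harmonic sum entry. -/
def aSgn (s : ℤ) : ℚ := if 0 < s then 1 else -1

/-- Alternating multiple harmonic sum `H_n(s₁,…,s_ℓ)` (strict indices). -/
def Hh : ℕ → List ℤ → ℚ
  | _, [] => 1
  | n, s :: r => ∑ k ∈ Finset.Icc 1 n, aSgn s ^ k / (k : ℚ) ^ s.natAbs * Hh (k - 1) r

/-- Alternating multiple harmonic star sum `H*_n(s₁,…,s_ℓ)` (weak indices). -/
def Hstar : ℕ → List ℤ → ℚ
  | _, [] => 1
  | n, s :: r => ∑ k ∈ Finset.Icc 1 n, aSgn s ^ k / (k : ℚ) ^ s.natAbs * Hstar k r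

/-- All compositions (ordered tuples of positive integers) of `w`. -/
def comps : ℕ → List (List ℕ)
  | 0 => [[]]
  | (w+1) => (List.range (w+1)).flatMap (fun j => (comps (w - j)).map (fun l => (j+1) :: l))
decreasing_by simp_wf <;> omega

/-- Coerce a list of naturals to a list of integers. -/
def natList (l : List ℕ) : List ℤ := l.map (fun m => (m : ℤ))


noncomputable def rr (n k : ℕ) : ℚ := (n.choose k : ℚ) / ((n+k).choose k : ℚ)

lemma choose_ne (n k : ℕ) : ((n+k).choose k : ℚ) ≠ 0 :=
  Nat.cast_ne_zero.mpr (Nat.choose_pos (Nat.le_add_left k n)).ne'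

lemma rr_eq_zero {n k : ℕ} (h : n < k) : rr n k = 0 := by
  simp [rr, Nat.choose_eq_zero_of_lt h]

-- R2
lemma R2 (n k : ℕ) : ((n:ℚ)+k+1) * rr n (k+1) = ((n:ℚ) - k) * rr n k := by
  rcases le_or_gt (k+1) n with h | h
  · have hkn : k ≤ n := le_of_lt (Nat.lt_of_succ_le h)
    have h1 : (n.choose (k+1) : ℚ) * ((k:ℚ)+1) = (n.choose k : ℚ) * ((n:ℚ) - k) := by
      have h2 : ((n.choose (k+1) * (k+1) : ℕ) : ℚ) = ((n.choose k * (n - k) : ℕ) : ℚ) := by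
        norm_cast
        exact Nat.choose_succ_right_eq n k
      push_cast [Nat.cast_sub hkn] at h2
      linarith [h2]
    have he : n + (k+1) = n + k + 1 := by ring
    have h3 : ((n+k+1).choose (k+1) : ℚ) * ((k:ℚ)+1) = ((n+k).choose k : ℚ) * ((n:ℚ)+k+1) := by
      have h2 : (((n+k+1) * (n+k).choose k : ℕ) : ℚ) = (((n+k+1).choose (k+1) * (k+1) : ℕ) : ℚ) := by
        norm_cast
        exact (Nat.add_one_mul_choose_eq (n+k) k)
      push_cast at h2 ⊢
      linarith [h2]
    have hd1 : ((n+k+1).choose (k+1) : ℚ) ≠ 0 := by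
      have := choose_ne n (k+1); rwa [he] at this
    have hd2 := choose_ne n k
    have hc1 : ((k:ℚ)+1) ≠ 0 := by positivity
    unfold rr
    rw [he, mul_div_assoc', mul_div_assoc', div_eq_div_iff hd1 hd2]
    apply mul_left_cancel₀ hc1
    linear_combination (((n:ℚ)+k+1)*((n+k).choose k : ℚ))*h1 - (((n:ℚ)-k)*(n.choose k : ℚ))*h3
  · have h2 : rr n (k+1) = 0 := rr_eq_zero h
    rcases Nat.lt_or_ge n k with h' | h'
    · rw [rr_eq_zero h', h2]; ring
    · have : n = k := le_antisymm (Nat.lt_succ_iff.mp h) h'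
      subst this
      rw [h2]; simp

-- S1
lemma S1 (n k : ℕ) : (((n:ℚ)+1) - k) * (((n:ℚ)+1) + k) * rr (n+1) k = ((n:ℚ)+1)^2 * rr n k := by
  rcases le_or_gt k n with h | h
  · have h1 : ((n+1).choose k : ℚ) * (((n:ℚ)+1) - k) = (n.choose k : ℚ) * ((n:ℚ)+1) := by
      have h3 : ((n.choose k * (n+1) : ℕ) : ℚ) = (((n+1).choose k * (n + 1 - k) : ℕ) : ℚ) := by
        norm_cast
        exact Nat.choose_mul_succ_eq n k
      push_cast [Nat.cast_sub (le_trans h (Nat.le_succ n))] at h3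
      linarith [h3]
    have he2 : n + 1 + k = n + k + 1 := by ring
    have h3 : ((n+k+1).choose k : ℚ) * ((n:ℚ)+1) = ((n+k).choose k : ℚ) * (((n:ℚ)+1) + k) := by
      have h4 : (((n+k).choose k * (n+k+1) : ℕ) : ℚ) = (((n+k+1).choose k * (n + k + 1 - k) : ℕ) : ℚ) := by
        norm_cast
        exact Nat.choose_mul_succ_eq (n+k) k
      have he : n + k + 1 - k = n + 1 := by omega
      rw [he] at h4
      push_cast at h4 ⊢
      linarith [h4]
    have hd1 : ((n+k+1).choose k : ℚ) ≠ 0 := by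
      have := choose_ne (n+1) k; rwa [he2] at this
    have hd2 := choose_ne n k
    unfold rr
    rw [he2, mul_div_assoc', mul_div_assoc', div_eq_div_iff hd1 hd2]
    linear_combination ((((n:ℚ)+1)+k)*((n+k).choose k : ℚ))*h1 - (((n:ℚ)+1)*(n.choose k : ℚ))*h3
  · rw [rr_eq_zero h]
    rcases Nat.lt_or_ge (n+1) k with h' | h'
    · rw [rr_eq_zero h']; ring
    · have : n + 1 = k := le_antisymm (Nat.succ_le_of_lt h) h'
      rw [← this]
      push_cast
      ring

-- Rdiff
lemma Rdiff (n k : ℕ) : ((n:ℚ)+1)^2 * (rr (n+1) k - rr n k) = (k:ℚ)^2 * rr (n+1) k := by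
  have := S1 n k
  nlinarith [this]

lemma Mlem (n : ℕ) : ∀ j : ℕ, 2 * ∑ k ∈ Icc j n, (k:ℚ) * rr n k = ((n:ℚ)+j) * rr n j := by
  suffices h : ∀ d j : ℕ, n = j + d → 2 * ∑ k ∈ Icc j n, (k:ℚ) * rr n k = ((n:ℚ)+j) * rr n j by
    intro j
    rcases le_or_gt j n with hjn | hjn
    · exact h (n - j) j (by omega)
    · rw [Finset.Icc_eq_empty (by omega), rr_eq_zero hjn]
      simp
  intro d
  induction d with
  | zero =>
    intro j hj
    subst hj
    simp only [Nat.add_zero, Finset.Icc_self, Finset.sum_singleton]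
    ring
  | succ d ih =>
    intro j hj
    have hjn : j ≤ n := by omega
    have h1 : Icc j n = insert j (Icc (j+1) n) := by
      ext x
      simp only [Finset.mem_Icc, Finset.mem_insert]
      omega
    rw [h1, Finset.sum_insert (by simp)]
    have h2 := ih (j+1) (by omega)
    push_cast at h2
    have h3 := R2 n j
    push_cast
    linarith [h2, h3]

lemma L2 (j : ℕ) (hj : 1 ≤ j) : ∀ n : ℕ, ∑ k ∈ Icc 1 n, rr k j / (k:ℚ)^2 = rr n j / (j:ℚ)^2 := by
  intro n
  induction n with
  | zero => simp [rr_eq_zero (show 0 < j from hj)]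
  | succ n ih =>
    rw [Finset.sum_Icc_succ_top (by omega), ih]
    have h := Rdiff n j
    have hj0 : ((j:ℚ))^2 ≠ 0 := by positivity
    have hn0 : (((n:ℕ):ℚ)+1)^2 ≠ 0 := by positivity
    field_simp
    push_cast
    nlinarith [h]

lemma filter_Icc (j m : ℕ) (f : ℕ → ℚ) (hj : 1 ≤ j) :
    ∑ k ∈ Icc 1 m, (if j < k then f k else 0) = ∑ k ∈ Icc (j+1) m, f k := by
  rw [← Finset.sum_filter]
  congr 1
  ext x
  simp only [Finset.mem_filter, Finset.mem_Icc]
  omega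

lemma L1 (j : ℕ) (hj : 1 ≤ j) : ∀ n : ℕ,
    ∑ k ∈ Icc 1 n, rr k j / k = rr n j / j + 2 * ∑ k ∈ Icc (j+1) n, rr n k / k := by
  intro n
  induction n with
  | zero =>
    rw [Finset.Icc_eq_empty (by omega), Finset.Icc_eq_empty (by omega)]
    simp [rr_eq_zero (show 0 < j from hj)]
  | succ n ih =>
    rw [Finset.sum_Icc_succ_top (by omega), ih]
    rcases le_or_gt j n with hjn | hjn
    · rw [Finset.sum_Icc_succ_top (show j+1 ≤ n+1 by omega)]
      have hdiff : ∑ k ∈ Icc (j+1) n, rr (n+1) k / k - ∑ k ∈ Icc (j+1) n, rr n k / k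
          = (∑ k ∈ Icc (j+1) n, (k:ℚ) * rr (n+1) k) / ((n:ℚ)+1)^2 := by
        rw [← Finset.sum_sub_distrib, Finset.sum_div]
        apply Finset.sum_congr rfl
        intro k hk
        have hk1 : 1 ≤ k := by
          simp only [Finset.mem_Icc] at hk; omega
        have h := Rdiff n k
        have hk0 : (k:ℚ) ≠ 0 := by positivity
        have hn0 : ((n:ℚ)+1)^2 ≠ 0 := by positivity
        rw [div_sub_div_same, eq_div_iff hn0]
        field_simp
        linarith [h]
      have hM : 2 * ∑ k ∈ Icc (j+1) (n+1), (k:ℚ) * rr (n+1) k = (((n:ℚ)+1)+(j+1)) * rr (n+1) (j+1) := by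
        have := Mlem (n+1) (j+1)
        push_cast at this ⊢
        linarith [this]
      have hMtop : ∑ k ∈ Icc (j+1) (n+1), (k:ℚ) * rr (n+1) k
          = ∑ k ∈ Icc (j+1) n, (k:ℚ) * rr (n+1) k + ((n:ℚ)+1) * rr (n+1) (n+1) := by
        rw [Finset.sum_Icc_succ_top (show j+1 ≤ n+1 by omega)]
        push_cast; ring
      have hR2 : (((n:ℚ)+1)+(j:ℚ)+1) * rr (n+1) (j+1) = (((n:ℚ)+1) - j) * rr (n+1) j := by
        have := R2 (n+1) j
        push_cast at this ⊢
        linarith [this]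
      have hdj : rr (n+1) j - rr n j = (j:ℚ)^2 * rr (n+1) j / ((n:ℚ)+1)^2 := by
        have := Rdiff n j
        have hn0 : ((n:ℚ)+1)^2 ≠ 0 := by positivity
        field_simp
        linarith [this]
      have hj0 : (j:ℚ) ≠ 0 := by positivity
      have hn0 : ((n:ℚ)+1)^2 ≠ 0 := by positivity
      have hn1 : ((n:ℚ)+1) ≠ 0 := by positivity
      -- goal : old LHS sum-free manipulation
      push_cast
      field_simp at hdiff hdj ⊢
      nlinarith [hdiff, hM, hMtop, hR2, hdj]
    · -- j > n
      have he1 : Icc (j+1) n = (∅ : Finset ℕ) := Finset.Icc_eq_empty (by omega)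
      rcases eq_or_lt_of_le (Nat.succ_le_of_lt hjn) with hjeq | hlt
      · -- j = n+1... hjeq : n+1 = j? Nat.succ_le_of_lt hjn : n+1 ≤ j
        have he2 : Icc (j+1) (n+1) = (∅ : Finset ℕ) := Finset.Icc_eq_empty (by omega)
        rw [he1, he2, ← hjeq]
        rw [rr_eq_zero (show n < n+1 by omega)]
        push_cast
        simp
      · have he2 : Icc (j+1) (n+1) = (∅ : Finset ℕ) := Finset.Icc_eq_empty (by omega)
        rw [he1, he2]
        rw [rr_eq_zero (show n < j by omega), rr_eq_zero (show n+1 < j by omega)]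
        simp

lemma tel (G : ℕ → ℚ) (n : ℕ) : ∑ k ∈ Icc 1 n, (G (k+1) - G k) = G (n+1) - G 1 := by
  induction n with
  | zero => simp
  | succ n ih => rw [Finset.sum_Icc_succ_top (by omega), ih]; ring

lemma E00 (n : ℕ) (hn : 1 ≤ n) : ∑ k ∈ Icc 1 n, (-1:ℚ)^k * rr n k = -(1/2) := by
  set G : ℕ → ℚ := fun k => (-1:ℚ)^k * (-(k:ℚ) - n) * rr n k with hG
  have key : ∀ k : ℕ, G (k+1) - G k = 2*(n:ℚ)*((-1)^k * rr n k) := by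
    intro k
    have h := R2 n k
    have hG1 : G (k+1) = (-1:ℚ)^k * ((n:ℚ) - k) * rr n k := by
      simp only [hG]
      push_cast
      rw [pow_succ]
      linear_combination ((-1:ℚ)^k) * h
    rw [hG1]
    simp only [hG]
    ring
  have htel : ∑ k ∈ Icc 1 n, (G (k+1) - G k) = G (n+1) - G 1 := tel G n
  have hsum : ∑ k ∈ Icc 1 n, (G (k+1) - G k) = 2*(n:ℚ) * ∑ k ∈ Icc 1 n, (-1:ℚ)^k * rr n k := by
    rw [Finset.mul_sum]
    exact Finset.sum_congr rfl (fun k _ => key k)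
  have hGn : G (n+1) = 0 := by
    simp only [hG]
    rw [rr_eq_zero (Nat.lt_succ_self n)]
    ring
  have hG1v : G 1 = (n:ℚ) := by
    simp only [hG]
    have h1 : rr n 1 = (n:ℚ) / ((n:ℚ)+1) := by
      unfold rr
      simp [Nat.choose_one_right]
    rw [h1]
    have : ((n:ℚ)+1) ≠ 0 := by positivity
    field_simp
    push_cast; ring
  have hn0 : (n:ℚ) ≠ 0 := by
    have : 0 < n := hn
    positivity
  have : 2*(n:ℚ) * ∑ k ∈ Icc 1 n, (-1:ℚ)^k * rr n k = -(n:ℚ) := by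
    rw [← hsum, htel, hGn, hG1v]; ring
  have h3 : (n:ℚ) * (∑ k ∈ Icc 1 n, (-1:ℚ)^k * rr n k) = (n:ℚ) * (-(1/2)) := by
    linarith [this]
  exact mul_left_cancel₀ hn0 h3

lemma inner_ext (φ : ℕ → ℚ) (k n : ℕ) (hk : k ≤ n) :
    ∑ j ∈ Icc 1 k, φ j * rr k j = ∑ j ∈ Icc 1 n, φ j * rr k j := by
  apply Finset.sum_subset (Finset.Icc_subset_Icc_right hk)
  intro j hj hj2
  simp only [Finset.mem_Icc] at hj hj2
  rw [rr_eq_zero (show k < j by omega)]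
  ring

lemma SwapA (φ : ℕ → ℚ) (n : ℕ) :
    ∑ k ∈ Icc 1 n, (1/(k:ℚ)^2) * (∑ j ∈ Icc 1 k, φ j * rr k j)
      = ∑ j ∈ Icc 1 n, φ j * rr n j / (j:ℚ)^2 := by
  have h1 : ∑ k ∈ Icc 1 n, (1/(k:ℚ)^2) * (∑ j ∈ Icc 1 k, φ j * rr k j)
      = ∑ k ∈ Icc 1 n, ∑ j ∈ Icc 1 n, φ j * (rr k j / (k:ℚ)^2) := by
    apply Finset.sum_congr rfl
    intro k hk
    simp only [Finset.mem_Icc] at hk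
    rw [inner_ext φ k n hk.2, Finset.mul_sum]
    exact Finset.sum_congr rfl (fun j _ => by ring)
  rw [h1, Finset.sum_comm]
  apply Finset.sum_congr rfl
  intro j hj
  simp only [Finset.mem_Icc] at hj
  rw [← Finset.mul_sum, L2 j hj.1 n]
  ring

lemma filter_Icc2 (k m : ℕ) (f : ℕ → ℚ) (hk : k ≤ m) :
    ∑ j ∈ Icc 1 m, (if j < k then f j else 0) = ∑ j ∈ Icc 1 (k-1), f j := by
  rw [← Finset.sum_filter]
  congr 1
  ext x
  simp only [Finset.mem_filter, Finset.mem_Icc]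
  omega


lemma SwapB (φ : ℕ → ℚ) (n : ℕ) :
    ∑ k ∈ Icc 1 n, (1/(k:ℚ)) * (∑ j ∈ Icc 1 k, φ j * rr k j)
      = ∑ j ∈ Icc 1 n, φ j * rr n j / (j:ℚ)
        + 2 * ∑ k ∈ Icc 1 n, (rr n k / (k:ℚ)) * (∑ j ∈ Icc 1 (k-1), φ j) := by
  have h1 : ∑ k ∈ Icc 1 n, (1/(k:ℚ)) * (∑ j ∈ Icc 1 k, φ j * rr k j)
      = ∑ k ∈ Icc 1 n, ∑ j ∈ Icc 1 n, φ j * (rr k j / (k:ℚ)) := by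
    apply Finset.sum_congr rfl
    intro k hk
    simp only [Finset.mem_Icc] at hk
    rw [inner_ext φ k n hk.2, Finset.mul_sum]
    exact Finset.sum_congr rfl (fun j _ => by ring)
  rw [h1, Finset.sum_comm]
  have h2 : ∀ j ∈ Icc 1 n, ∑ k ∈ Icc 1 n, φ j * (rr k j / (k:ℚ))
      = φ j * rr n j / j + 2 * ∑ k ∈ Icc 1 n, (if j < k then φ j * (rr n k / k) else 0) := by
    intro j hj
    simp only [Finset.mem_Icc] at hj
    rw [← Finset.mul_sum, L1 j hj.1 n, filter_Icc j n (fun k => φ j * (rr n k / k)) hj.1,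
      ← Finset.mul_sum]
    ring
  rw [Finset.sum_congr rfl h2, Finset.sum_add_distrib]
  congr 1
  rw [← Finset.mul_sum]
  congr 1
  rw [Finset.sum_comm]
  apply Finset.sum_congr rfl
  intro k hk
  simp only [Finset.mem_Icc] at hk
  rw [filter_Icc2 k n (fun j => φ j * (rr n k / k)) hk.2, ← Finset.sum_mul]
  ring

lemma Hstar_cons (n : ℕ) (s : ℤ) (l : List ℤ) :
    Hstar n (s::l) = ∑ k ∈ Icc 1 n, aSgn s ^ k / (k:ℚ)^s.natAbs * Hstar k l := by
  rw [Hstar]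

lemma Hstar_two (n : ℕ) (l : List ℤ) :
    Hstar n ((2:ℤ)::l) = ∑ k ∈ Icc 1 n, (1/(k:ℚ)^2) * Hstar k l := by
  rw [Hstar_cons]
  apply Finset.sum_congr rfl
  intro k _
  norm_num [aSgn]

lemma Hstar_one (n : ℕ) (l : List ℤ) :
    Hstar n ((1:ℤ)::l) = ∑ k ∈ Icc 1 n, (1/(k:ℚ)) * Hstar k l := by
  rw [Hstar_cons]
  apply Finset.sum_congr rfl
  intro k _
  norm_num [aSgn]

lemma Hh_neg2c (m c : ℕ) : Hh m [-(2*(c:ℤ))] = ∑ j ∈ Icc 1 m, (-1:ℚ)^j / (j:ℚ)^(2*c) := by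
  rw [Hh]
  apply Finset.sum_congr rfl
  intro j _
  have h1 : aSgn (-(2*(c:ℤ))) = -1 := by
    simp only [aSgn, if_neg (show ¬((0:ℤ) < -(2*(c:ℤ))) by omega)]
  have h2 : (-(2*(c:ℤ))).natAbs = 2*c := by omega
  rw [h1, h2]
  simp [Hh]

lemma Hh_negodd (m b c : ℕ) : Hh m [-(2*(b:ℤ)+1+2*(c:ℤ))]
    = ∑ j ∈ Icc 1 m, (-1:ℚ)^j / (j:ℚ)^(2*b+2*c+1) := by
  rw [Hh]
  apply Finset.sum_congr rfl
  intro j _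
  have h1 : aSgn (-(2*(b:ℤ)+1+2*(c:ℤ))) = -1 := by
    simp only [aSgn, if_neg (show ¬((0:ℤ) < -(2*(b:ℤ)+1+2*(c:ℤ))) by omega)]
  have h2 : (-(2*(b:ℤ)+1+2*(c:ℤ))).natAbs = 2*b+2*c+1 := by omega
  rw [h1, h2]
  simp [Hh]

lemma Hh_double (m b c : ℕ) : Hh m [2*(b:ℤ)+1, -(2*(c:ℤ))]
    = ∑ j ∈ Icc 1 m, (1:ℚ)/(j:ℚ)^(2*b+1) * Hh (j-1) [-(2*(c:ℤ))] := by
  rw [Hh]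
  apply Finset.sum_congr rfl
  intro j _
  have h1 : aSgn (2*(b:ℤ)+1) = 1 := by
    simp only [aSgn, if_pos (show (0:ℤ) < 2*(b:ℤ)+1 by omega)]
  have h2 : (2*(b:ℤ)+1).natAbs = 2*b+1 := by omega
  rw [h1, h2, one_pow]

lemma OneStep (L : List ℤ) (φ : ℕ → ℚ)
    (h : ∀ n, 1 ≤ n → Hstar n L = ∑ k ∈ Icc 1 n, φ k * rr n k) (n : ℕ) (hn : 1 ≤ n) :
    Hstar n ((1:ℤ) :: L)
      = ∑ k ∈ Icc 1 n, (φ k / k + 2 * (∑ j ∈ Icc 1 (k-1), φ j) / k) * rr n k := by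
  rw [Hstar_one]
  have h1 : ∀ k ∈ Icc 1 n, (1/(k:ℚ)) * Hstar k L = (1/(k:ℚ)) * ∑ j ∈ Icc 1 k, φ j * rr k j := by
    intro k hk
    simp only [Finset.mem_Icc] at hk
    rw [h k hk.1]
  rw [Finset.sum_congr rfl h1, SwapB, Finset.mul_sum, ← Finset.sum_add_distrib]
  apply Finset.sum_congr rfl
  intro k _
  ring

lemma RepTwo (L : List ℤ) (φ : ℕ → ℚ)
    (h : ∀ n, 1 ≤ n → Hstar n L = ∑ k ∈ Icc 1 n, φ k * rr n k) :
    ∀ (a : ℕ) (n : ℕ), 1 ≤ n → Hstar n (List.replicate a 2 ++ L)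
      = ∑ k ∈ Icc 1 n, φ k / (k:ℚ)^(2*a) * rr n k := by
  intro a
  induction a with
  | zero =>
    intro n hn
    simp only [List.replicate_zero, List.nil_append, Nat.mul_zero, pow_zero, div_one]
    exact h n hn
  | succ a ih =>
    intro n hn
    rw [List.replicate_succ, List.cons_append, Hstar_two]
    have h1 : ∀ k ∈ Icc 1 n, (1/(k:ℚ)^2) * Hstar k (List.replicate a 2 ++ L)
        = (1/(k:ℚ)^2) * ∑ j ∈ Icc 1 k, (φ j / (j:ℚ)^(2*a)) * rr k j := by
      intro k hk
      simp only [Finset.mem_Icc] at hk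
      rw [ih k hk.1]
    rw [Finset.sum_congr rfl h1, SwapA]
    apply Finset.sum_congr rfl
    intro k hk
    simp only [Finset.mem_Icc] at hk
    have hk0 : (k:ℚ) ≠ 0 := (Nat.cast_pos.mpr hk.1).ne'
    rw [show 2*(a+1) = 2*a + 2 by ring, pow_add]
    field_simp

lemma base0 : ∀ n, 1 ≤ n → Hstar n ([] : List ℤ) = ∑ k ∈ Icc 1 n, (-2*(-1:ℚ)^k) * rr n k := by
  intro n hn
  have h1 : Hstar n ([] : List ℤ) = 1 := rfl
  rw [h1]
  have h2 : ∑ k ∈ Icc 1 n, (-2*(-1:ℚ)^k) * rr n k = -2 * ∑ k ∈ Icc 1 n, (-1:ℚ)^k * rr n k := by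
    rw [Finset.mul_sum]
    exact Finset.sum_congr rfl (fun k _ => by ring)
  rw [h2, E00 n hn]
  norm_num

lemma E0 (c : ℕ) : ∀ n, 1 ≤ n → Hstar n (List.replicate c 2)
    = ∑ k ∈ Icc 1 n, (-2*(-1:ℚ)^k) / (k:ℚ)^(2*c) * rr n k := by
  intro n hn
  have := RepTwo [] (fun k => -2*(-1:ℚ)^k) base0 c n hn
  rwa [List.append_nil] at this

lemma base1 (c : ℕ) : ∀ n, 1 ≤ n → Hstar n ((1:ℤ) :: List.replicate c 2)
    = ∑ k ∈ Icc 1 n,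
        (-2*(-1:ℚ)^k/(k:ℚ)^(2*c+1) + (-4)*Hh (k-1) [-(2*(c:ℤ))]/(k:ℚ)) * rr n k := by
  intro n hn
  rw [OneStep (List.replicate c 2) (fun k => (-2*(-1:ℚ)^k)/(k:ℚ)^(2*c)) (E0 c) n hn]
  apply Finset.sum_congr rfl
  intro k hk
  simp only [Finset.mem_Icc] at hk
  have hk0 : (k:ℚ) ≠ 0 := (Nat.cast_pos.mpr hk.1).ne'
  have hS : ∑ j ∈ Icc 1 (k-1), (-2*(-1:ℚ)^j)/(j:ℚ)^(2*c) = -2 * Hh (k-1) [-(2*(c:ℤ))] := by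
    rw [Hh_neg2c, Finset.mul_sum]
    exact Finset.sum_congr rfl (fun j _ => by ring)
  rw [hS]
  have hp : (k:ℚ)^(2*c) ≠ 0 := pow_ne_zero _ hk0
  field_simp
  ring

lemma E1 (b c : ℕ) : ∀ n, 1 ≤ n → Hstar n (List.replicate b 2 ++ ((1:ℤ) :: List.replicate c 2))
    = ∑ k ∈ Icc 1 n,
        (-2*(-1:ℚ)^k/(k:ℚ)^(2*c+1) + (-4)*Hh (k-1) [-(2*(c:ℤ))]/(k:ℚ)) / (k:ℚ)^(2*b) * rr n k :=
  RepTwo _ _ (base1 c) b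

lemma E2 (b c : ℕ) : ∀ n, 1 ≤ n →
    Hstar n ((1:ℤ) :: (List.replicate b 2 ++ (1:ℤ) :: List.replicate c 2))
    = ∑ k ∈ Icc 1 n,
        (-2*(-1:ℚ)^k/(k:ℚ)^(2*b+2*c+2) + (-4)*Hh (k-1) [-(2*(c:ℤ))]/(k:ℚ)^(2*b+2)
          + (-4)*Hh (k-1) [-(2*(b:ℤ)+1+2*(c:ℤ))]/(k:ℚ)
          + (-8)*Hh (k-1) [2*(b:ℤ)+1, -(2*(c:ℤ))]/(k:ℚ)) * rr n k := by
  intro n hn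
  rw [OneStep _ _ (E1 b c) n hn]
  apply Finset.sum_congr rfl
  intro k hk
  simp only [Finset.mem_Icc] at hk
  have hk0 : (k:ℚ) ≠ 0 := (Nat.cast_pos.mpr hk.1).ne'
  have hS : ∑ j ∈ Icc 1 (k-1),
      (-2*(-1:ℚ)^j/(j:ℚ)^(2*c+1) + (-4)*Hh (j-1) [-(2*(c:ℤ))]/(j:ℚ)) / (j:ℚ)^(2*b)
      = (-2) * Hh (k-1) [-(2*(b:ℤ)+1+2*(c:ℤ))] + (-4) * Hh (k-1) [2*(b:ℤ)+1, -(2*(c:ℤ))] := by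
    rw [Hh_negodd, Hh_double, Finset.mul_sum, Finset.mul_sum, ← Finset.sum_add_distrib]
    apply Finset.sum_congr rfl
    intro j hj
    simp only [Finset.mem_Icc] at hj
    have hj0 : (j:ℚ) ≠ 0 := (Nat.cast_pos.mpr hj.1).ne'
    have hp1 : (j:ℚ)^(2*b) ≠ 0 := pow_ne_zero _ hj0
    have hp2 : (j:ℚ)^(2*c+1) ≠ 0 := pow_ne_zero _ hj0
    field_simp
    ring
  rw [hS]
  have hp1 : (k:ℚ)^(2*b) ≠ 0 := pow_ne_zero _ hk0
  have hp2 : (k:ℚ)^(2*c+1) ≠ 0 := pow_ne_zero _ hk0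
  field_simp
  ring

theorem stmt6 (n a b c : ℕ) (hn : 1 ≤ n) (hc : 1 ≤ c) :
    Hstar n (List.replicate a 2 ++ [1] ++ List.replicate b 2 ++ [1] ++ List.replicate c 2)
      = -2 * ∑ k ∈ Finset.Icc 1 n,
            (-1 : ℚ) ^ k * (n.choose k) / ((k : ℚ) ^ (2*(a+b+c)+2) * ((n+k).choose k))
        - 4 * ∑ k ∈ Finset.Icc 1 n,
            Hh (k-1) [-(2 * (c : ℤ))] * (n.choose k)
              / ((k : ℚ) ^ (2*a+2*b+2) * ((n+k).choose k))
        - 4 * ∑ k ∈ Finset.Icc 1 n,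
            Hh (k-1) [-(2 * (b : ℤ) + 1 + 2 * (c : ℤ))] * (n.choose k)
              / ((k : ℚ) ^ (2*a+1) * ((n+k).choose k))
        - 8 * ∑ k ∈ Finset.Icc 1 n,
            Hh (k-1) [2 * (b : ℤ) + 1, -(2 * (c : ℤ))] * (n.choose k)
              / ((k : ℚ) ^ (2*a+1) * ((n+k).choose k)) := by
  have hlist : List.replicate a 2 ++ [(1:ℤ)] ++ List.replicate b 2 ++ [1] ++ List.replicate c 2
      = List.replicate a 2 ++ ((1:ℤ) :: (List.replicate b 2 ++ (1:ℤ) :: List.replicate c 2)) := by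
    simp [List.append_assoc]
  rw [hlist, RepTwo _ _ (E2 b c) a n hn]
  have hsplit : ∀ k ∈ Icc 1 n,
      (-2*(-1:ℚ)^k/(k:ℚ)^(2*b+2*c+2) + (-4)*Hh (k-1) [-(2*(c:ℤ))]/(k:ℚ)^(2*b+2)
          + (-4)*Hh (k-1) [-(2*(b:ℤ)+1+2*(c:ℤ))]/(k:ℚ)
          + (-8)*Hh (k-1) [2*(b:ℤ)+1, -(2*(c:ℤ))]/(k:ℚ)) / (k:ℚ)^(2*a) * rr n k
      = -2 * ((-1 : ℚ) ^ k * (n.choose k) / ((k : ℚ) ^ (2*(a+b+c)+2) * ((n+k).choose k)))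
        + -4 * (Hh (k-1) [-(2 * (c : ℤ))] * (n.choose k)
              / ((k : ℚ) ^ (2*a+2*b+2) * ((n+k).choose k)))
        + -4 * (Hh (k-1) [-(2 * (b : ℤ) + 1 + 2 * (c : ℤ))] * (n.choose k)
              / ((k : ℚ) ^ (2*a+1) * ((n+k).choose k)))
        + -8 * (Hh (k-1) [2 * (b : ℤ) + 1, -(2 * (c : ℤ))] * (n.choose k)
              / ((k : ℚ) ^ (2*a+1) * ((n+k).choose k))) := by
    intro k hk
    simp only [Finset.mem_Icc] at hk
    have hk0 : (k:ℚ) ≠ 0 := (Nat.cast_pos.mpr hk.1).ne'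
    have hC : ((n+k).choose k : ℚ) ≠ 0 := choose_ne n k
    unfold rr
    have hp1 : (k:ℚ)^(2*a) ≠ 0 := pow_ne_zero _ hk0
    have hp2 : (k:ℚ)^(2*b+2*c+2) ≠ 0 := pow_ne_zero _ hk0
    have hp3 : (k:ℚ)^(2*b+2) ≠ 0 := pow_ne_zero _ hk0
    field_simp
    ring
  rw [Finset.sum_congr rfl hsplit]
  rw [Finset.sum_add_distrib, Finset.sum_add_distrib, Finset.sum_add_distrib,
      ← Finset.mul_sum, ← Finset.mul_sum, ← Finset.mul_sum, ← Finset.mul_sum]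
  ring
end

section
/- Let n ≥ 1, a ≥ 1 be integers, let v = (v_1,...,v_d) be a tuple of nonzero integers, and let H_{k-1}(v) denote the alternating multiple harmonic sum. Then n·∑_{k=1}^{n} H_{k-1}(v)·C(n,k)/(k^a·C(n+k,k)) = ∑_{k=1}^{n} H_{k-1}(v)·C(n,k)/(k^{a-1}·C(n+k,k)) + 2·∑_{k=1}^{n} H_{k-1}(a, v)·k·C(n,k)/C(n+k,k), where (a, v) denotes the tuple with a prepended to v. -/
open Finset

lemma chooseQ_ne (n k : ℕ) : (((n+k).choose k : ℚ)) ≠ 0 := by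
  have := Nat.choose_pos (Nat.le_add_left k n)
  exact_mod_cast this.ne'

lemma gstep (n j : ℕ) (hj : j < n) :
    ((n:ℚ) - j) * (n.choose j) / ((n+j).choose j)
      - ((n:ℚ) - (j+1)) * (n.choose (j+1)) / ((n+(j+1)).choose (j+1))
    = 2 * ((j:ℚ)+1) * (n.choose (j+1)) / ((n+(j+1)).choose (j+1)) := by
  have hd : ((n+j).choose j : ℚ) ≠ 0 := chooseQ_ne n j
  have hj1 : ((j:ℚ)+1) ≠ 0 := by positivity
  have hnj1 : ((n:ℚ)+j+1) ≠ 0 := by positivity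
  have e1 : (n.choose (j+1) : ℚ) = ((n:ℚ) - j) * (n.choose j) / ((j:ℚ)+1) := by
    have h := Nat.choose_succ_right_eq n j
    have hq : (n.choose (j+1) : ℚ) * ((j:ℚ)+1) = (n.choose j : ℚ) * ((n:ℚ) - j) := by
      have h2 : ((n.choose (j+1) * (j+1) : ℕ) : ℚ) = ((n.choose j * (n-j) : ℕ) : ℚ) := by
        exact_mod_cast congrArg (fun x : ℕ => (x:ℚ)) h
      push_cast [Nat.cast_sub hj.le] at h2
      linarith
    field_simp
    linarith [hq]
  have e2 : ((n+(j+1)).choose (j+1) : ℚ) = ((n:ℚ)+j+1) * ((n+j).choose j) / ((j:ℚ)+1) := by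
    have h := Nat.add_one_mul_choose_eq (n+j) j
    have hq : ((n+(j+1)).choose (j+1) : ℚ) * ((j:ℚ)+1) = ((n:ℚ)+j+1) * ((n+j).choose j) := by
      have : (n+(j+1)) = (n+j)+1 := by omega
      rw [this]
      have h2 : ((((n+j)+1) * (n+j).choose j : ℕ) : ℚ) = (((n+j+1).choose (j+1) * (j+1) : ℕ) : ℚ) := by
        exact_mod_cast congrArg (fun x : ℕ => (x:ℚ)) h
      push_cast at h2
      linarith
    field_simp
    linarith [hq]
  rw [e1, e2]
  have hd2 : ((n:ℚ)+j+1) * ((n+j).choose j) / ((j:ℚ)+1) ≠ 0 := by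
    apply div_ne_zero (mul_ne_zero hnj1 hd) hj1
  field_simp
  ring

lemma sumA (n j : ℕ) (hj : j ≤ n) :
    2 * ∑ k ∈ Icc (j+1) n, (k:ℚ) * (n.choose k) / ((n+k).choose k)
      = ((n:ℚ) - j) * (n.choose j) / ((n+j).choose j) := by
  have key : ∑ k ∈ Icc (j+1) n, (2 * (k:ℚ) * (n.choose k) / ((n+k).choose k))
      = ((n:ℚ) - j) * (n.choose j) / ((n+j).choose j) := by
    have hIcc : Icc (j+1) n = Ico (j+1) (n+1) := by
      rw [Finset.Ico_add_one_right_eq_Icc]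
    rw [hIcc, Finset.sum_Ico_eq_sum_range]
    have hlen : n + 1 - (j + 1) = n - j := by omega
    rw [hlen]
    set g : ℕ → ℚ := fun m => ((n:ℚ) - m) * (n.choose m) / ((n+m).choose m) with hg
    have hterm : ∀ i ∈ Finset.range (n - j),
        2 * ((j+1+i : ℕ):ℚ) * (n.choose (j+1+i)) / ((n+(j+1+i)).choose (j+1+i))
        = g (j+i) - g (j+i+1) := by
      intro i hi
      simp only [Finset.mem_range] at hi
      have h := gstep n (j+i) (by omega)
      simp only [hg]
      have e : j + 1 + i = (j+i) + 1 := by omega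
      rw [e]
      push_cast at h ⊢
      linarith [h]
    rw [Finset.sum_congr rfl hterm]
    simp only [add_assoc]
    rw [Finset.sum_range_sub' (fun i => g (j+i))]
    have e1 : j + 0 = j := by omega
    have e2 : j + (n - j) = n := by omega
    rw [e1, e2]
    simp [hg]
  rw [Finset.mul_sum]
  rw [← key]
  apply Finset.sum_congr rfl
  intro k _
  ring

theorem stmt7 (n a : ℕ) (hn : 1 ≤ n) (ha : 1 ≤ a) (v : List ℤ) (hv : ∀ s ∈ v, s ≠ 0) :
    (n : ℚ) * ∑ k ∈ Finset.Icc 1 n,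
        Hh (k-1) v * (n.choose k) / ((k : ℚ) ^ a * ((n+k).choose k))
      = ∑ k ∈ Finset.Icc 1 n,
          Hh (k-1) v * (n.choose k) / ((k : ℚ) ^ (a-1) * ((n+k).choose k))
        + 2 * ∑ k ∈ Finset.Icc 1 n,
            Hh (k-1) ((a : ℤ) :: v) * (k : ℚ) * (n.choose k) / ((n+k).choose k) := by
  have hHa : ∀ k : ℕ, Hh (k-1) ((a:ℤ) :: v)
      = ∑ j ∈ Icc 1 (k-1), (Hh (j-1) v / (j:ℚ)^a) := by
    intro k
    rw [Hh]
    apply Finset.sum_congr rfl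
    intro j _
    have hs : aSgn (a:ℤ) = 1 := by
      unfold aSgn
      rw [if_pos]
      exact_mod_cast ha
    rw [hs, one_pow, Int.natAbs_natCast]
    ring
  have key : ∑ k ∈ Icc 1 n,
        Hh (k-1) v * (n.choose k) * ((n:ℚ) - k) / ((k:ℚ)^a * ((n+k).choose k))
      = 2 * ∑ k ∈ Icc 1 n,
          Hh (k-1) ((a:ℤ)::v) * (k:ℚ) * (n.choose k) / ((n+k).choose k) := by
    rw [Finset.mul_sum]
    have step1 : ∀ k ∈ Icc 1 n,
        2 * (Hh (k-1) ((a:ℤ)::v) * (k:ℚ) * (n.choose k) / ((n+k).choose k))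
        = ∑ j ∈ Icc 1 (k-1),
            (Hh (j-1) v / (j:ℚ)^a) * (2 * (k:ℚ) * (n.choose k) / ((n+k).choose k)) := by
      intro k _
      rw [hHa k, Finset.sum_mul, Finset.sum_mul, Finset.sum_div, Finset.mul_sum]
      apply Finset.sum_congr rfl
      intro j _
      ring
    rw [Finset.sum_congr rfl step1]
    rw [Finset.sum_comm' (s := Icc 1 n) (t := fun k => Icc 1 (k-1))
        (t' := Icc 1 n) (s' := fun j => Icc (j+1) n) (by
          intro k j
          simp only [Finset.mem_Icc]
          omega)]
    apply Finset.sum_congr rfl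
    intro j hj
    simp only [Finset.mem_Icc] at hj
    rw [← Finset.mul_sum]
    have hA := sumA n j hj.2
    have hd : ((n+j).choose j : ℚ) ≠ 0 := chooseQ_ne n j
    have hja : ((j:ℚ))^a ≠ 0 := by
      have : (j:ℚ) ≠ 0 := by
        exact_mod_cast Nat.one_le_iff_ne_zero.mp hj.1
      positivity
    rw [show ∑ k ∈ Icc (j+1) n, (2 * (k:ℚ) * (n.choose k) / ((n+k).choose k))
        = 2 * ∑ k ∈ Icc (j+1) n, ((k:ℚ) * (n.choose k) / ((n+k).choose k)) by
          rw [Finset.mul_sum]; apply Finset.sum_congr rfl; intro k _; ring]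
    rw [hA]
    field_simp
  rw [← key, Finset.mul_sum, ← Finset.sum_add_distrib]
  apply Finset.sum_congr rfl
  intro k hk
  simp only [Finset.mem_Icc] at hk
  have hk0 : (k:ℚ) ≠ 0 := by
    exact_mod_cast Nat.one_le_iff_ne_zero.mp hk.1
  have hd : ((n+k).choose k : ℚ) ≠ 0 := chooseQ_ne n k
  have hpow : (k:ℚ)^a = (k:ℚ)^(a-1) * k := by
    conv_lhs => rw [show a = (a-1)+1 by omega]
    rw [pow_succ]
  rw [hpow]
  have hka : ((k:ℚ))^(a-1) ≠ 0 := by positivity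
  field_simp
  ring
end
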